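/- Suppose for each node t the approximate diffused value satisfies 0 ≤ Σ_{j} σ'_j π(j,t) − ρ°_t ≤ ε d(t), where σ'_j = Σ_i π'_i s(i,j) d(j) with 0 ≤ π(s,i) − π'_i ≤ ε d(i) for all i, and 0 ≤ s(i,j) ≤ 1 is symmetric. Then the normalized estimate ρ'_t = ρ°_t/d(t) satisfies 0 ≤ ρ_t − ρ'_t ≤ (1 + Σ_i d(i)·max_j s(i,j))·ε, where ρ_t = Σ_{i,j} π(s,i) s(i,j) π(t,j) is the exact bidirectional diffusion distribution. -/

import Mathlib

/-- Accuracy guarantee of LACA: on a finite graph with transition matrix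
`P = D⁻¹A`, degrees `d i > 0`, restart factor `α ∈ (0,1)` and RWR scores `π`,
let `s` be a symmetric similarity with values in `[0,1]`, `π'` a nonnegative
approximation of the seed's RWR vector with `0 ≤ π vs i - π' i ≤ ε d i`,
`σ' j = (∑ i, π' i * s i j) * d j` the RWR-SNAS vector, and `ρ°` an approximate
diffusion of `σ'` with `0 ≤ ∑ j, σ' j * π j t - ρ° t ≤ ε d t`. Then the
normalized estimate `ρ' t = ρ° t / d t` of the exact bidirectional diffusion
distribution `ρ t = ∑ i, ∑ j, π vs i * s i j * π t j` satisfies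
`0 ≤ ρ t - ρ' t ≤ (1 + ∑ i, d i * max_j s i j) * ε`. -/
theorem laca_accuracy {n : ℕ} [NeZero n] (A : Matrix (Fin n) (Fin n) ℝ)
    (hsymm : A.IsSymm) (h01 : ∀ i j, A i j = 0 ∨ A i j = 1)
    (d : Fin n → ℝ) (hd : ∀ i, d i = ∑ j, A i j) (hdpos : ∀ i, 0 < d i)
    (P : Matrix (Fin n) (Fin n) ℝ) (hP : ∀ i j, P i j = A i j / d i)
    (α : ℝ) (hα : α ∈ Set.Ioo (0 : ℝ) 1) (ε : ℝ) (hε : 0 < ε)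
    (π : Fin n → Fin n → ℝ)
    (hπ : ∀ x y, π x y = ∑' ℓ : ℕ, (1 - α) * α ^ ℓ * (P ^ ℓ) x y)
    (s : Fin n → Fin n → ℝ)
    (hs01 : ∀ i j, 0 ≤ s i j ∧ s i j ≤ 1) (hssymm : ∀ i j, s i j = s j i)
    (vs : Fin n)
    (π' : Fin n → ℝ) (hπ'nonneg : ∀ i, 0 ≤ π' i)
    (hπ'err : ∀ i, 0 ≤ π vs i - π' i ∧ π vs i - π' i ≤ ε * d i)
    (σ' : Fin n → ℝ) (hσ' : ∀ j, σ' j = (∑ i, π' i * s i j) * d j)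
    (ρ0 : Fin n → ℝ)
    (hρ0 : ∀ t, 0 ≤ (∑ j, σ' j * π j t) - ρ0 t ∧
      (∑ j, σ' j * π j t) - ρ0 t ≤ ε * d t)
    (ρ' : Fin n → ℝ) (hρ' : ∀ t, ρ' t = ρ0 t / d t)
    (ρ : Fin n → ℝ)
    (hρ : ∀ t, ρ t = ∑ i, ∑ j, π vs i * s i j * π t j) :
    ∀ t, 0 ≤ ρ t - ρ' t ∧
      ρ t - ρ' t ≤
        (1 + ∑ i, d i * Finset.univ.sup' Finset.univ_nonempty (s i)) * ε := by
  obtain ⟨hα0, hα1⟩ := hα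
  have hAnn : ∀ i j, 0 ≤ A i j := fun i j => by rcases h01 i j with h | h <;> simp [h]
  have hPnn : ∀ i j, 0 ≤ P i j := fun i j => by
    rw [hP]; exact div_nonneg (hAnn i j) (hdpos i).le
  have hProw : ∀ i, ∑ j, P i j = 1 := fun i => by
    simp only [hP]
    rw [← Finset.sum_div, ← hd, div_self (hdpos i).ne']
  have hpow_nn : ∀ ℓ i j, 0 ≤ (P ^ ℓ) i j := by
    intro ℓ
    induction ℓ with
    | zero => intro i j; simp [Matrix.one_apply]; split_ifs <;> norm_num
    | succ m ih =>
      intro i j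
      rw [pow_succ, Matrix.mul_apply]
      exact Finset.sum_nonneg fun k _ => mul_nonneg (ih i k) (hPnn k j)
  have hpow_row : ∀ ℓ i, ∑ j, (P ^ ℓ) i j = 1 := by
    intro ℓ
    induction ℓ with
    | zero => intro i; simp [Matrix.one_apply]
    | succ m ih =>
      intro i
      simp only [pow_succ, Matrix.mul_apply]
      rw [Finset.sum_comm]
      calc (∑ k, ∑ j, (P ^ m) i k * P k j) = ∑ k, (P ^ m) i k * ∑ j, P k j := by
            simp [Finset.mul_sum]
        _ = 1 := by simp [hProw, ih i]
  have hpow_le : ∀ ℓ i j, (P ^ ℓ) i j ≤ 1 := fun ℓ i j => by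
    rw [← hpow_row ℓ i]
    exact Finset.single_le_sum (fun k _ => hpow_nn ℓ i k) (Finset.mem_univ j)
  have hsumm : ∀ x y, Summable (fun ℓ : ℕ => (1 - α) * α ^ ℓ * (P ^ ℓ) x y) := by
    intro x y
    apply Summable.of_nonneg_of_le
      (fun ℓ => mul_nonneg (mul_nonneg (by linarith) (pow_nonneg hα0.le ℓ)) (hpow_nn ℓ x y))
      (fun ℓ => ?_)
      (((summable_geometric_of_lt_one hα0.le hα1)).mul_left (1 - α))
    calc (1 - α) * α ^ ℓ * (P ^ ℓ) x y ≤ (1 - α) * α ^ ℓ * 1 :=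
          mul_le_mul_of_nonneg_left (hpow_le ℓ x y)
            (mul_nonneg (by linarith) (pow_nonneg hα0.le ℓ))
      _ = (1 - α) * α ^ ℓ := mul_one _
  have hπnn : ∀ x y, 0 ≤ π x y := fun x y => by
    rw [hπ]
    exact tsum_nonneg fun ℓ =>
      mul_nonneg (mul_nonneg (by linarith) (pow_nonneg hα0.le ℓ)) (hpow_nn ℓ x y)
  have hrev : ∀ ℓ (x y : Fin n), d x * (P ^ ℓ) x y = d y * (P ^ ℓ) y x := by
    intro ℓ
    induction ℓ with
    | zero =>
      intro x y
      rcases eq_or_ne x y with rfl | h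
      · rfl
      · simp [Matrix.one_apply, h, h.symm]
    | succ m ih =>
      intro x y
      have step : ∀ k, d x * ((P ^ m) x k * P k y) = d y * (P y k * (P ^ m) k x) := by
        intro k
        have h1 := ih x k
        have hAky : A k y = A y k := hsymm.apply y k
        have hk := (hdpos k).ne'
        have hy := (hdpos y).ne'
        rw [hP, hP, ← mul_assoc, h1, hAky]
        field_simp
      calc d x * (P ^ (m + 1)) x y = ∑ k, d x * ((P ^ m) x k * P k y) := by
            rw [pow_succ, Matrix.mul_apply, Finset.mul_sum]
        _ = ∑ k, d y * (P y k * (P ^ m) k x) := Finset.sum_congr rfl fun k _ => step k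
        _ = d y * (P ^ (m + 1)) y x := by
            rw [pow_succ', Matrix.mul_apply, Finset.mul_sum]
  have hrevπ : ∀ x y, d x * π x y = d y * π y x := by
    intro x y
    rw [hπ, hπ, ← tsum_mul_left, ← tsum_mul_left]
    apply tsum_congr
    intro ℓ
    calc d x * ((1 - α) * α ^ ℓ * (P ^ ℓ) x y)
        = (1 - α) * α ^ ℓ * (d x * (P ^ ℓ) x y) := by ring
      _ = (1 - α) * α ^ ℓ * (d y * (P ^ ℓ) y x) := by rw [hrev ℓ x y]
      _ = d y * ((1 - α) * α ^ ℓ * (P ^ ℓ) y x) := by ring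
  have hrowπ : ∀ t, ∑ j, π t j = 1 := by
    intro t
    have h1 : ∑ j, π t j = ∑' ℓ : ℕ, ∑ j, (1 - α) * α ^ ℓ * (P ^ ℓ) t j := by
      simp only [hπ]
      exact (Summable.tsum_finsetSum fun j _ => hsumm t j).symm
    rw [h1]
    have h2 : ∀ ℓ : ℕ, (∑ j, (1 - α) * α ^ ℓ * (P ^ ℓ) t j) = (1 - α) * α ^ ℓ := by
      intro ℓ
      rw [← Finset.mul_sum, hpow_row, mul_one]
    rw [tsum_congr h2, tsum_mul_left, tsum_geometric_of_lt_one hα0.le hα1]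
    exact mul_inv_cancel₀ (by linarith)
  intro t
  set M : Fin n → ℝ := fun i => Finset.univ.sup' Finset.univ_nonempty (s i) with hM
  have hMge : ∀ i j, s i j ≤ M i := fun i j => Finset.le_sup' (s i) (Finset.mem_univ j)
  have hMnn : ∀ i, 0 ≤ M i := fun i => le_trans (hs01 i 0).1 (hMge i 0)
  set E : ℝ := ∑ i, (π vs i - π' i) * (∑ j, s i j * π t j) with hE
  have hinner_nn : ∀ i, 0 ≤ ∑ j, s i j * π t j := fun i =>
    Finset.sum_nonneg fun j _ => mul_nonneg (hs01 i j).1 (hπnn t j)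
  have hinner_le : ∀ i, (∑ j, s i j * π t j) ≤ M i := by
    intro i
    calc (∑ j, s i j * π t j) ≤ ∑ j, M i * π t j :=
          Finset.sum_le_sum fun j _ => mul_le_mul_of_nonneg_right (hMge i j) (hπnn t j)
      _ = M i := by rw [← Finset.mul_sum, hrowπ, mul_one]
  have hEnn : 0 ≤ E :=
    Finset.sum_nonneg fun i _ => mul_nonneg (hπ'err i).1 (hinner_nn i)
  have hEle : E ≤ ε * ∑ i, d i * M i := by
    rw [Finset.mul_sum]
    apply Finset.sum_le_sum
    intro i _
    calc (π vs i - π' i) * (∑ j, s i j * π t j) ≤ (ε * d i) * M i :=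
          mul_le_mul (hπ'err i).2 (hinner_le i) (hinner_nn i)
            (mul_nonneg hε.le (hdpos i).le)
      _ = ε * (d i * M i) := by ring
  have hkey : ∑ j, σ' j * π j t = d t * ∑ i, π' i * (∑ j, s i j * π t j) := by
    have h3 : ∀ j, σ' j * π j t = ∑ i, π' i * s i j * (d t * π t j) := by
      intro j
      rw [hσ']
      calc (∑ i, π' i * s i j) * d j * π j t
          = (∑ i, π' i * s i j) * (d j * π j t) := by ring
        _ = (∑ i, π' i * s i j) * (d t * π t j) := by rw [hrevπ j t]
        _ = ∑ i, π' i * s i j * (d t * π t j) := by rw [Finset.sum_mul]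
    rw [Finset.sum_congr rfl fun j _ => h3 j, Finset.sum_comm, Finset.mul_sum]
    apply Finset.sum_congr rfl
    intro i _
    rw [Finset.mul_sum, Finset.mul_sum]
    apply Finset.sum_congr rfl
    intro j _
    ring
  have hρexp : d t * ρ t = d t * ∑ i, π vs i * (∑ j, s i j * π t j) := by
    rw [hρ]
    congr 1
    apply Finset.sum_congr rfl
    intro i _
    rw [Finset.mul_sum]
    apply Finset.sum_congr rfl
    intro j _
    ring
  have hnum : d t * ρ t - ρ0 t = d t * E + ((∑ j, σ' j * π j t) - ρ0 t) := by
    rw [hρexp, hkey, hE]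
    rw [Finset.mul_sum, Finset.mul_sum, Finset.mul_sum]
    have expand : ∀ i, d t * ((π vs i - π' i) * ∑ j, s i j * π t j)
        = d t * (π vs i * ∑ j, s i j * π t j)
          - d t * (π' i * ∑ j, s i j * π t j) := fun i => by ring
    rw [Finset.sum_congr rfl fun i _ => expand i, Finset.sum_sub_distrib]
    ring
  have hdiff : ρ t - ρ' t = (d t * ρ t - ρ0 t) / d t := by
    rw [hρ', sub_div, mul_div_cancel_left₀ _ (hdpos t).ne']
  constructor
  · rw [hdiff]
    apply div_nonneg _ (hdpos t).le
    rw [hnum]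
    have := (hρ0 t).1
    nlinarith [mul_nonneg (hdpos t).le hEnn]
  · rw [hdiff]
    rw [div_le_iff₀ (hdpos t)]
    rw [hnum]
    have h4 := (hρ0 t).2
    have h5 : d t * E ≤ d t * (ε * ∑ i, d i * M i) :=
      mul_le_mul_of_nonneg_left hEle (hdpos t).le
    have : (1 + ∑ i, d i * M i) * ε * d t
        = d t * (ε * ∑ i, d i * M i) + ε * d t := by ring
    rw [this]
    linarith
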